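/- On ℝ³ let ⟨x,y⟩₁,₂ := −x₁y₁ + x₂y₂ + x₃y₃. Let V₀ ⊆ ℝ³ be a two-dimensional linear subspace and b₁ ∈ V₀ a nonzero vector with ⟨b₁,b₁⟩₁,₂ = 0 and ⟨b₁,x⟩₁,₂ = 0 for all x ∈ V₀ (so V₀ is a degenerate plane with null direction b₁). Let Λ ⊆ V₀ be the set of integer linear combinations of some ℝ-basis of V₀ (a lattice in V₀). If A is a 3×3 real matrix with ⟨Ax,Ay⟩₁,₂ = ⟨x,y⟩₁,₂ for all x,y, det A = 1, A₁₁ > 0 (A preserves the time orientation), and A(Λ) = Λ, then A·b₁ = b₁. -/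

import Mathlib

open Matrix

/-- The Minkowski inner product `⟨x,y⟩₁,₂ = −x₁y₁ + x₂y₂ + x₃y₃` on `ℝ³`. -/
def mdot (x y : Fin 3 → ℝ) : ℝ := -(x 0 * y 0) + x 1 * y 1 + x 2 * y 2

lemma null_orth (x y : Fin 3 → ℝ) (hx : mdot x x = 0) (hy : mdot y y = 0)
    (hxy : mdot x y = 0) : x 0 • y = y 0 • x := by
  simp only [mdot] at hx hy hxy
  have key : (x 0 * y 1 - y 0 * x 1)^2 + (x 0 * y 2 - y 0 * x 2)^2 = 0 := by
    linear_combination (x 0)^2 * hy + (y 0)^2 * hx - 2 * (x 0) * (y 0) * hxy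
  have h1 : x 0 * y 1 - y 0 * x 1 = 0 := by
    nlinarith [sq_nonneg (x 0 * y 1 - y 0 * x 1), sq_nonneg (x 0 * y 2 - y 0 * x 2)]
  have h2 : x 0 * y 2 - y 0 * x 2 = 0 := by
    nlinarith [sq_nonneg (x 0 * y 1 - y 0 * x 1), sq_nonneg (x 0 * y 2 - y 0 * x 2)]
  funext i
  fin_cases i <;> simp [Pi.smul_apply] <;> linarith [h1, h2, mul_comm (x 0) (y 0)]

lemma mdot_expand (α β : ℝ) (x y : Fin 3 → ℝ) :
    mdot (α • x + β • y) (α • x + β • y)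
      = α^2 * mdot x x + 2*(α*β) * mdot x y + β^2 * mdot y y := by
  simp [mdot]; ring

lemma mdot_smul_sq (c : ℝ) (x : Fin 3 → ℝ) :
    mdot (c • x) (c • x) = c^2 * mdot x x := by
  simp [mdot]; ring

lemma row_rel (A : Matrix (Fin 3) (Fin 3) ℝ)
    (hA : ∀ x y : Fin 3 → ℝ, mdot (A.mulVec x) (A.mulVec y) = mdot x y) :
    -(A 0 0 * A 0 0) + A 0 1 * A 0 1 + A 0 2 * A 0 2 = -1 := by
  set η : Matrix (Fin 3) (Fin 3) ℝ := !![(-1:ℝ),0,0;0,1,0;0,0,1] with hηdef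
  have hη2 : η * η = 1 := by
    ext i j
    fin_cases i <;> fin_cases j <;>
      simp [hηdef, Matrix.mul_apply, Fin.sum_univ_three, Matrix.one_apply,
        Matrix.vecHead, Matrix.vecTail]
  have h1 : A.transpose * η * A = η := by
    ext i j
    have := hA (Pi.single i 1) (Pi.single j 1)
    simp only [mdot, Matrix.mulVec, dotProduct, Fin.sum_univ_three,
      Pi.single_apply] at this
    fin_cases i <;> fin_cases j <;>
      · simp only [hηdef, Matrix.mul_apply, Fin.sum_univ_three, Matrix.transpose_apply,
          Matrix.cons_val', Matrix.cons_val_zero, Matrix.cons_val_one, Matrix.head_cons,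
          Matrix.empty_val', Matrix.cons_val_fin_one, Matrix.head_fin_const] at this ⊢
        simp [Matrix.vecHead, Matrix.vecTail] at this ⊢
        nlinarith [this]
  have h2 : (η * A.transpose * η) * A = 1 := by
    calc (η * A.transpose * η) * A = η * (A.transpose * η * A) := by
          simp only [Matrix.mul_assoc]
    _ = η * η := by rw [h1]
    _ = 1 := hη2
  have h3 : A * (η * A.transpose * η) = 1 := mul_eq_one_comm.mpr h2
  have h4 : A * η * A.transpose = η := by
    have := congrArg (· * η) h3
    simp only [Matrix.mul_assoc] at this ⊢
    rw [hη2] at this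
    simpa [Matrix.mul_assoc] using this
  have := congrFun (congrFun h4 0) 0
  simp only [hηdef, Matrix.mul_apply, Fin.sum_univ_three, Matrix.transpose_apply] at this
  simp [Matrix.vecHead, Matrix.vecTail] at this
  linarith

set_option maxHeartbeats 2000000 in
/-- Let `V₀ = span{v,w}` be a two-dimensional degenerate plane in `ℝ^{1,2}`
with null direction `b₁` (so `b₁ ∈ V₀`, `b₁ ≠ 0`, `⟨b₁,b₁⟩₁,₂ = 0`, `b₁ ⊥ V₀`), and let
`Λ = ℤv + ℤw` be the lattice spanned by the basis `v,w` of `V₀`.  If `A ∈ SO₀(1,2)`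
(form-preserving, `det A = 1`, `A₁₁ > 0`) satisfies `A(Λ) = Λ`, then `A b₁ = b₁`. -/
theorem stmt11 (v w b₁ : Fin 3 → ℝ)
    (hindep : LinearIndependent ℝ ![v, w])
    (hb₁mem : b₁ ∈ Submodule.span ℝ {v, w}) (hb₁ne : b₁ ≠ 0)
    (hnull : mdot b₁ b₁ = 0)
    (hdeg : ∀ x ∈ Submodule.span ℝ ({v, w} : Set (Fin 3 → ℝ)), mdot b₁ x = 0)
    (A : Matrix (Fin 3) (Fin 3) ℝ)
    (hA : ∀ x y : Fin 3 → ℝ, mdot (A.mulVec x) (A.mulVec y) = mdot x y)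
    (hdet : A.det = 1) (htime : 0 < A 0 0)
    (hlat : A.mulVec '' {x | ∃ m n : ℤ, x = m • v + n • w} =
      {x | ∃ m n : ℤ, x = m • v + n • w}) :
    A.mulVec b₁ = b₁ := by
  classical
  have hind : ∀ α β : ℝ, α • v + β • w = 0 → α = 0 ∧ β = 0 :=
    fun α β h => LinearIndependent.pair_iff.mp hindep α β h
  obtain ⟨a, b, hab⟩ := Submodule.mem_span_pair.mp hb₁mem
  have hb0 : b₁ 0 ≠ 0 := by
    intro h0
    apply hb₁ne
    have h' : -(b₁ 0 * b₁ 0) + b₁ 1 * b₁ 1 + b₁ 2 * b₁ 2 = 0 := hnull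
    funext i
    fin_cases i <;> simp <;> nlinarith [h', sq_nonneg (b₁ 1), sq_nonneg (b₁ 2), h0]
  have hvmem : v ∈ {x : Fin 3 → ℝ | ∃ m n : ℤ, x = m • v + n • w} := ⟨1, 0, by simp⟩
  have hwmem : w ∈ {x : Fin 3 → ℝ | ∃ m n : ℤ, x = m • v + n • w} := ⟨0, 1, by simp⟩
  obtain ⟨p, q, hpq⟩ : ∃ m n : ℤ, A.mulVec v = m • v + n • w := by
    have := hlat ▸ Set.mem_image_of_mem A.mulVec hvmem; exact this
  obtain ⟨r, s, hrs⟩ : ∃ m n : ℤ, A.mulVec w = m • v + n • w := by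
    have := hlat ▸ Set.mem_image_of_mem A.mulVec hwmem; exact this
  have hAv : A.mulVec v = (p : ℝ) • v + (q : ℝ) • w := by
    rw [hpq, ← Int.cast_smul_eq_zsmul ℝ p v, ← Int.cast_smul_eq_zsmul ℝ q w]
  have hAw : A.mulVec w = (r : ℝ) • v + (s : ℝ) • w := by
    rw [hrs, ← Int.cast_smul_eq_zsmul ℝ r v, ← Int.cast_smul_eq_zsmul ℝ s w]
  obtain ⟨x, hxmem, hAx⟩ : ∃ x ∈ {x : Fin 3 → ℝ | ∃ m n : ℤ, x = m • v + n • w},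
      A.mulVec x = v := by rw [← hlat] at hvmem; exact hvmem
  obtain ⟨y, hymem, hAy⟩ : ∃ y ∈ {x : Fin 3 → ℝ | ∃ m n : ℤ, x = m • v + n • w},
      A.mulVec y = w := by rw [← hlat] at hwmem; exact hwmem
  obtain ⟨p', q', hx⟩ := hxmem
  obtain ⟨r', s', hy⟩ := hymem
  have hx' : x = (p' : ℝ) • v + (q' : ℝ) • w := by
    rw [hx, ← Int.cast_smul_eq_zsmul ℝ p' v, ← Int.cast_smul_eq_zsmul ℝ q' w]
  have hy' : y = (r' : ℝ) • v + (s' : ℝ) • w := by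
    rw [hy, ← Int.cast_smul_eq_zsmul ℝ r' v, ← Int.cast_smul_eq_zsmul ℝ s' w]
  have hAx' : ((p' : ℝ) * p + (q' : ℝ) * r - 1) • v + ((p' : ℝ) * q + (q' : ℝ) * s) • w
      = 0 := by
    have h := hAx
    rw [hx', Matrix.mulVec_add, Matrix.mulVec_smul, Matrix.mulVec_smul, hAv, hAw] at h
    funext i
    have hi := congrFun h i
    simp only [Pi.add_apply, Pi.smul_apply, smul_eq_mul, Pi.zero_apply] at hi ⊢
    linear_combination hi
  have hAy' : ((r' : ℝ) * p + (s' : ℝ) * r) • v + ((r' : ℝ) * q + (s' : ℝ) * s - 1) • w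
      = 0 := by
    have h := hAy
    rw [hy', Matrix.mulVec_add, Matrix.mulVec_smul, Matrix.mulVec_smul, hAv, hAw] at h
    funext i
    have hi := congrFun h i
    simp only [Pi.add_apply, Pi.smul_apply, smul_eq_mul, Pi.zero_apply] at hi ⊢
    linear_combination hi
  obtain ⟨e1, e2⟩ := hind _ _ hAx'
  obtain ⟨e3, e4⟩ := hind _ _ hAy'
  have hDint : (p * s - q * r) * (p' * s' - q' * r') = 1 := by
    have f1 : p * p' + r * q' = 1 := by
      have : ((p * p' + r * q' : ℤ) : ℝ) = 1 := by push_cast; linarith [e1]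
      exact_mod_cast this
    have f2 : q * p' + s * q' = 0 := by
      have : ((q * p' + s * q' : ℤ) : ℝ) = 0 := by push_cast; linarith [e2]
      exact_mod_cast this
    have f3 : p * r' + r * s' = 0 := by
      have : ((p * r' + r * s' : ℤ) : ℝ) = 0 := by push_cast; linarith [e3]
      exact_mod_cast this
    have f4 : q * r' + s * s' = 1 := by
      have : ((q * r' + s * s' : ℤ) : ℝ) = 1 := by push_cast; linarith [e4]
      exact_mod_cast this
    linear_combination (q * r' + s * s') * f1 - (p * r' + r * s') * f2 + f4
  have hD2 : ((p : ℝ) * s - (q : ℝ) * r)^2 = 1 := by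
    rcases Int.isUnit_iff.mp (IsUnit.of_mul_eq_one _ hDint) with h | h
    · have h' : (p : ℝ) * s - (q : ℝ) * r = 1 := by exact_mod_cast h
      rw [h']; norm_num
    · have h' : (p : ℝ) * s - (q : ℝ) * r = -1 := by exact_mod_cast h
      rw [h']; norm_num
  set u : Fin 3 → ℝ := A.mulVec b₁ with hudef
  have huvw : u = (a * p + b * r) • v + (a * q + b * s) • w := by
    rw [hudef, ← hab, Matrix.mulVec_add, Matrix.mulVec_smul, Matrix.mulVec_smul, hAv, hAw]
    funext i
    simp only [Pi.add_apply, Pi.smul_apply, smul_eq_mul]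
    ring
  have huV : u ∈ Submodule.span ℝ ({v, w} : Set (Fin 3 → ℝ)) :=
    Submodule.mem_span_pair.mpr ⟨a * p + b * r, a * q + b * s, huvw.symm⟩
  have hudeg : mdot b₁ u = 0 := hdeg u huV
  have huu : mdot u u = 0 := by rw [hudef, hA]; exact hnull
  have hprop : b₁ 0 • u = u 0 • b₁ := null_orth b₁ u hnull huu hudeg
  set lam : ℝ := u 0 / b₁ 0 with hlamdef
  have hlam : u = lam • b₁ := by
    funext i
    have := congrFun hprop i
    simp only [Pi.smul_apply, smul_eq_mul] at this ⊢
    rw [hlamdef]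
    field_simp
    linarith [this]
  have heig : ((a * p + b * r) - lam * a) • v + ((a * q + b * s) - lam * b) • w = 0 := by
    have h' : (a * p + b * r) • v + (a * q + b * s) • w = lam • (a • v + b • w) := by
      rw [← huvw, hlam, hab]
    funext i
    have hi := congrFun h' i
    simp only [Pi.add_apply, Pi.smul_apply, smul_eq_mul, Pi.zero_apply] at hi ⊢
    linear_combination hi
  obtain ⟨eg1, eg2⟩ := hind _ _ heig
  have hrow := row_rel A hA
  have hu0 : u 0 = A 0 0 * b₁ 0 + A 0 1 * b₁ 1 + A 0 2 * b₁ 2 := by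
    rw [hudef]
    simp [Matrix.mulVec, dotProduct, Fin.sum_univ_three]
  have hlam0 : lam * b₁ 0 = A 0 0 * b₁ 0 + A 0 1 * b₁ 1 + A 0 2 * b₁ 2 := by
    have := congrFun hlam 0
    simp only [Pi.smul_apply, smul_eq_mul] at this
    rw [← this, hu0]
  have hnull' : -(b₁ 0 * b₁ 0) + b₁ 1 * b₁ 1 + b₁ 2 * b₁ 2 = 0 := hnull
  have hb0sq : 0 < b₁ 0 * b₁ 0 := mul_self_pos.mpr hb0
  have hr2 : A 0 1^2 + A 0 2^2 = A 0 0^2 - 1 := by linear_combination hrow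
  have hbb : b₁ 1^2 + b₁ 2^2 = b₁ 0^2 := by linear_combination hnull'
  have hB2 : 0 < b₁ 0^2 := by rw [sq]; exact mul_self_pos.mpr hb0
  have hC : (A 0 1 * b₁ 1 + A 0 2 * b₁ 2)^2 ≤ (A 0 0^2 - 1) * b₁ 0^2 := by
    have hid : (A 0 1 * b₁ 1 + A 0 2 * b₁ 2)^2 + (A 0 1 * b₁ 2 - A 0 2 * b₁ 1)^2
        = (A 0 1^2 + A 0 2^2) * (b₁ 1^2 + b₁ 2^2) := by ring
    calc (A 0 1 * b₁ 1 + A 0 2 * b₁ 2)^2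
        ≤ (A 0 1^2 + A 0 2^2) * (b₁ 1^2 + b₁ 2^2) := by
          linarith [hid, sq_nonneg (A 0 1 * b₁ 2 - A 0 2 * b₁ 1)]
    _ = (A 0 0^2 - 1) * b₁ 0^2 := by rw [hr2, hbb]
  have hlampos : 0 < lam := by
    by_contra hc
    push_neg at hc
    have h1 : 0 < A 0 0 * b₁ 0^2 := mul_pos htime hB2
    have h3 : lam * b₁ 0^2 ≤ 0 :=
      mul_nonpos_iff.mpr (Or.inr ⟨hc, sq_nonneg _⟩)
    have hm : lam * b₁ 0^2
        = A 0 0 * b₁ 0^2 + (A 0 1 * b₁ 1 + A 0 2 * b₁ 2) * b₁ 0 := by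
      linear_combination b₁ 0 * hlam0
    have h2 : A 0 0 * b₁ 0^2 ≤ -((A 0 1 * b₁ 1 + A 0 2 * b₁ 2) * b₁ 0) := by
      linarith
    have h4 := mul_self_le_mul_self h1.le h2
    have h5 := mul_le_mul_of_nonneg_right hC (sq_nonneg (b₁ 0))
    linarith [h4, h5, mul_pos hB2 hB2]
  have hdegw : mdot b₁ w = 0 := hdeg w (Submodule.subset_span (Set.mem_insert_of_mem _ rfl))
  have hdegv : mdot b₁ v = 0 := hdeg v (Submodule.subset_span (Set.mem_insert _ _))
  have habne : a ≠ 0 ∨ b ≠ 0 := by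
    by_contra hc
    push_neg at hc
    apply hb₁ne
    rw [← hab, hc.1, hc.2]
    simp
  have hlam1 : lam = 1 := by
    rcases habne with ha | hb
    · have hww : mdot w w ≠ 0 := by
        intro h0
        have hwp : b₁ 0 • w = w 0 • b₁ := null_orth b₁ w hnull h0 hdegw
        have e5 : (w 0 * a) • v + (w 0 * b - b₁ 0) • w = 0 := by
          funext i
          have hi := congrFun hwp i
          have hbi := congrFun hab i
          simp only [Pi.add_apply, Pi.smul_apply, smul_eq_mul, Pi.zero_apply] at hi hbi ⊢
          linear_combination w 0 * hbi - hi
        obtain ⟨z1, z2⟩ := hind _ _ e5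
        have hw0 : w 0 = 0 := by
          rcases mul_eq_zero.mp z1 with h | h
          · exact h
          · exact absurd h ha
        apply hb0
        rw [hw0] at z2
        linarith [z2]
      have hkey : a • (A.mulVec w) = (r : ℝ) • b₁ + ((s : ℝ) * a - (r : ℝ) * b) • w := by
        rw [hAw, ← hab]
        funext i
        simp only [Pi.add_apply, Pi.smul_apply, smul_eq_mul]
        ring
      have hsq1 : mdot (a • A.mulVec w) (a • A.mulVec w) = a^2 * mdot w w := by
        rw [mdot_smul_sq, hA]
      have hsq2 : mdot (a • A.mulVec w) (a • A.mulVec w)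
          = ((s : ℝ) * a - (r : ℝ) * b)^2 * mdot w w := by
        rw [hkey, mdot_expand, hnull, hdegw]; ring
      have hf2 : ((s : ℝ) * a - (r : ℝ) * b)^2 = a^2 := by
        have h5 : (((s : ℝ) * a - (r : ℝ) * b)^2 - a^2) * mdot w w = 0 := by
          linarith [hsq1, hsq2]
        rcases mul_eq_zero.mp h5 with h | h
        · linarith [h]
        · exact absurd h hww
      have hDf : lam * ((s : ℝ) * a - (r : ℝ) * b) = a * ((p : ℝ) * s - (q : ℝ) * r) := by
        linear_combination (r : ℝ) * eg2 - (s : ℝ) * eg1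
      have hl2 : lam^2 * a^2 = a^2 := by
        linear_combination (-(lam^2)) * hf2
          + (lam * ((s : ℝ) * a - (r : ℝ) * b) + a * ((p : ℝ) * s - (q : ℝ) * r)) * hDf
          + a^2 * hD2
      have ha2 : (0:ℝ) < a^2 := by positivity
      have hsq : lam^2 = 1 := by
        have := mul_right_cancel₀ ha2.ne' (hl2.trans (one_mul (a^2)).symm)
        exact this
      have hfac : (lam - 1) * (lam + 1) = 0 := by linear_combination hsq
      rcases mul_eq_zero.mp hfac with h | h
      · linarith
      · linarith
    · have hvv : mdot v v ≠ 0 := by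
        intro h0
        have hvp : b₁ 0 • v = v 0 • b₁ := null_orth b₁ v hnull h0 hdegv
        have e5 : (v 0 * a - b₁ 0) • v + (v 0 * b) • w = 0 := by
          funext i
          have hi := congrFun hvp i
          have hbi := congrFun hab i
          simp only [Pi.add_apply, Pi.smul_apply, smul_eq_mul, Pi.zero_apply] at hi hbi ⊢
          linear_combination v 0 * hbi - hi
        obtain ⟨z1, z2⟩ := hind _ _ e5
        have hv0 : v 0 = 0 := by
          rcases mul_eq_zero.mp z2 with h | h
          · exact h
          · exact absurd h hb
        apply hb0
        rw [hv0] at z1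
        linarith [z1]
      have hkey : b • (A.mulVec v) = (q : ℝ) • b₁ + ((p : ℝ) * b - (q : ℝ) * a) • v := by
        rw [hAv, ← hab]
        funext i
        simp only [Pi.add_apply, Pi.smul_apply, smul_eq_mul]
        ring
      have hsq1 : mdot (b • A.mulVec v) (b • A.mulVec v) = b^2 * mdot v v := by
        rw [mdot_smul_sq, hA]
      have hsq2 : mdot (b • A.mulVec v) (b • A.mulVec v)
          = ((p : ℝ) * b - (q : ℝ) * a)^2 * mdot v v := by
        rw [hkey, mdot_expand, hnull, hdegv]; ring
      have hf2 : ((p : ℝ) * b - (q : ℝ) * a)^2 = b^2 := by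
        have h5 : (((p : ℝ) * b - (q : ℝ) * a)^2 - b^2) * mdot v v = 0 := by
          linarith [hsq1, hsq2]
        rcases mul_eq_zero.mp h5 with h | h
        · linarith [h]
        · exact absurd h hvv
      have hDf : lam * ((p : ℝ) * b - (q : ℝ) * a) = b * ((p : ℝ) * s - (q : ℝ) * r) := by
        linear_combination (q : ℝ) * eg1 - (p : ℝ) * eg2
      have hl2 : lam^2 * b^2 = b^2 := by
        linear_combination (-(lam^2)) * hf2
          + (lam * ((p : ℝ) * b - (q : ℝ) * a) + b * ((p : ℝ) * s - (q : ℝ) * r)) * hDf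
          + b^2 * hD2
      have hb2 : (0:ℝ) < b^2 := by positivity
      have hsq : lam^2 = 1 := by
        have := mul_right_cancel₀ hb2.ne' (hl2.trans (one_mul (b^2)).symm)
        exact this
      have hfac : (lam - 1) * (lam + 1) = 0 := by linear_combination hsq
      rcases mul_eq_zero.mp hfac with h | h
      · linarith
      · linarith
  show u = b₁
  rw [hlam, hlam1, one_smul]
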